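/- Let A be a finite-dimensional associative unital ℂ-algebra equipped with an involution x ↦ x*, i.e., a map satisfying 1* = 1, (x*)* = x, (x·y)* = y*·x*, (x + y)* = x* + y*, and (λ·x)* = conj(λ)·x* for λ ∈ ℂ, which is positive in the sense that x ≠ 0 implies x*·x ≠ 0. Then A is a semisimple ring. -/

import Mathlib

/-- The "right kernel" of an element: elements killed by right multiplication,
as a left submodule. -/
def rightKer (A : Type*) [Ring A] (g : A) : Submodule A A where
  carrier := {x | x * g = 0}
  add_mem' := by intro a b ha hb; simp only [Set.mem_setOf_eq] at *; rw [add_mul, ha, hb, add_zero]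
  zero_mem' := zero_mul g
  smul_mem' := by
    intro c x hx
    simp only [Set.mem_setOf_eq] at *
    rw [smul_eq_mul, mul_assoc, hx, mul_zero]

@[simp] lemma mem_rightKer {A : Type*} [Ring A] {g x : A} : x ∈ rightKer A g ↔ x * g = 0 :=
  Iff.rfl

/-- A finite-dimensional associative unital ℂ-algebra equipped with a
positive involution is a semisimple ring. -/
theorem semisimple_of_positive_involution (A : Type*) [Ring A] [Algebra ℂ A]
    [FiniteDimensional ℂ A] (star : A → A)
    (h1 : star 1 = 1)
    (hinv : ∀ x, star (star x) = x)
    (hmul : ∀ x y, star (x * y) = star y * star x)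
    (hadd : ∀ x y, star (x + y) = star x + star y)
    (hsmul : ∀ (l : ℂ) (x : A), star (l • x) = (starRingEnd ℂ l) • star x)
    (hpos : ∀ x : A, x ≠ 0 → star x * x ≠ 0) :
    IsSemisimpleRing A := by
  classical
  -- membership helper
  have hmem : ∀ (I : Submodule A A) (a x : A), x ∈ I → a * x ∈ I := by
    intro I a x hx
    simpa [smul_eq_mul] using I.smul_mem a hx
  -- main lemma: every left ideal has a right "relative unit"
  have main : ∀ (n : ℕ) (I : Submodule A A),
      Module.finrank ℂ (I.restrictScalars ℂ) ≤ n → ∃ g ∈ I, ∀ x ∈ I, x * g = x := by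
    intro n
    induction n using Nat.strong_induction_on with
    | _ n ih =>
      intro I hIn
      by_cases hI0 : I = ⊥
      · exact ⟨0, I.zero_mem, by rintro x hx; rw [hI0] at hx; simp_all⟩
      · obtain ⟨y, hyI, hy0⟩ := Submodule.exists_mem_ne_zero_of_ne_bot hI0
        set z := star y * y with hzdef
        have hzI : z ∈ I := hmem I (star y) y hyI
        have hz0 : z ≠ 0 := hpos y hy0
        have hzsa : star z = z := by rw [hzdef, hmul, hinv]
        have hz2 : z * z ≠ 0 := by have := hpos z hz0; rwa [hzsa] at this
        set N : Submodule A A := I ⊓ rightKer A z with hNdef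
        by_cases hN : N = ⊥
        · -- right multiplication by z is injective, hence surjective, on I
          let ψ : (I.restrictScalars ℂ) →ₗ[ℂ] (I.restrictScalars ℂ) :=
            { toFun := fun x => ⟨x.1 * z, hmem I _ _ hzI⟩
              map_add' := by intro a b; ext; simp [add_mul]
              map_smul' := by intro c x; ext; simp [Algebra.smul_mul_assoc] }
          have hinj : Function.Injective ψ := by
            rw [← LinearMap.ker_eq_bot, LinearMap.ker_eq_bot']
            intro m hm
            have h1 : m.1 * z = 0 := congrArg Subtype.val hm
            have : m.1 ∈ N := ⟨m.2, h1⟩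
            rw [hN] at this
            exact Subtype.ext this
          have hsurj := (LinearMap.injective_iff_surjective).mp hinj
          obtain ⟨e, he⟩ := hsurj ⟨z, hzI⟩
          have hez : e.1 * z = z := congrArg Subtype.val he
          refine ⟨e.1, e.2, fun x hx => ?_⟩
          have hmem' : x * e.1 - x ∈ N := by
            refine ⟨I.sub_mem (hmem I x e.1 e.2) hx, ?_⟩
            show (x * e.1 - x) * z = 0
            rw [sub_mul, mul_assoc, hez, sub_self]
          rw [hN] at hmem'
          exact sub_eq_zero.mp (Submodule.mem_bot A |>.mp hmem')
        · -- N is a proper nonzero subideal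
          have hNI : N < I := by
            refine lt_of_le_of_ne inf_le_left fun h => ?_
            have : z ∈ N := h ▸ hzI
            exact hz2 this.2
          have hrank : Module.finrank ℂ (N.restrictScalars ℂ) <
              Module.finrank ℂ (I.restrictScalars ℂ) := by
            apply Submodule.finrank_lt_finrank_of_lt
            exact lt_of_le_of_ne (fun x hx => hNI.le hx)
              (fun h => hNI.ne (Submodule.restrictScalars_injective ℂ A A h))
          obtain ⟨f, hfN, hf⟩ := ih _ (lt_of_lt_of_le hrank hIn) N le_rfl
          have hff : f * f = f := hf f hfN
          have hf0 : f ≠ 0 := by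
            obtain ⟨w, hwN, hw0⟩ := Submodule.exists_mem_ne_zero_of_ne_bot hN
            intro h; exact hw0 (by rw [← hf w hwN, h, mul_zero])
          set I' : Submodule A A := I ⊓ rightKer A f with hI'def
          have hfI : f ∈ I := hNI.le hfN
          have hI'I : I' < I := by
            refine lt_of_le_of_ne inf_le_left fun h => ?_
            have : f ∈ I' := h ▸ hfI
            exact hf0 (by rw [← hff]; exact this.2)
          have hrank' : Module.finrank ℂ (I'.restrictScalars ℂ) <
              Module.finrank ℂ (I.restrictScalars ℂ) := by
            apply Submodule.finrank_lt_finrank_of_lt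
            exact lt_of_le_of_ne (fun x hx => hI'I.le hx)
              (fun h => hI'I.ne (Submodule.restrictScalars_injective ℂ A A h))
          obtain ⟨e, heI', he⟩ := ih _ (lt_of_lt_of_le hrank' hIn) I' le_rfl
          refine ⟨f + e - f * e, ?_, fun x hx => ?_⟩
          · exact I.sub_mem (I.add_mem hfI (hI'I.le heI')) (hmem I f e (hI'I.le heI'))
          · have hx' : x - x * f ∈ I' := by
              refine ⟨I.sub_mem hx (hmem I x f hfI), ?_⟩
              show (x - x * f) * f = 0
              rw [sub_mul, mul_assoc, hff, sub_self]
            have := he _ hx'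
            calc x * (f + e - f * e) = x * f + (x - x * f) * e := by noncomm_ring
              _ = x * f + (x - x * f) := by rw [this]
              _ = x := by noncomm_ring
  -- conclude semisimplicity
  refine (isSemisimpleModule_iff A A).mpr ⟨fun I => ?_⟩
  obtain ⟨g, hgI, hg⟩ := main _ I le_rfl
  have hgg : g * g = g := hg g hgI
  refine ⟨rightKer A g, ?_, ?_⟩
  · rw [disjoint_iff]
    ext x
    simp only [Submodule.mem_inf, Submodule.mem_bot, mem_rightKer]
    exact ⟨fun ⟨h1, h2⟩ => by rw [← hg x h1, h2], fun h => by simp [h]⟩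
  · rw [codisjoint_iff_le_sup]
    intro a _
    have h1 : a * g ∈ I := hmem I a g hgI
    have h2 : a - a * g ∈ rightKer A g := by
      show (a - a * g) * g = 0
      rw [sub_mul, mul_assoc, hgg, sub_self]
    have : a = a * g + (a - a * g) := by noncomm_ring
    rw [this]
    exact Submodule.add_mem_sup h1 h2
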